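/- arXiv:2511.01376 — 2 statements merged into one kernel-verified Lean document; each statement's English description precedes it below -/
import Mathlib

section
/- Let T be a leaf-colored rooted tree and for each internal node v define M(v) as the maximum of: (a) count_i(u) over all children u of v and all colors i that attain the mode at u, and (b) count_i(v) over all colors i such that v is the LCA of two distinct leaves of color i. Then M(v) equals the mode frequency f^max_v, the maximum over all colors i of count_i(v). -/
variable {V : Type*}

/-- One step up: the parent of `a` is `b`. -/
def ParentStep (parent : V → Option V) : V → V → Prop :=
  fun a b => parent a = some b

/-- `Anc parent u v` means `u` is an ancestor of `v` (reflexively: `v` itself counts). -/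
def Anc (parent : V → Option V) (u v : V) : Prop :=
  Relation.ReflTransGen (ParentStep parent) v u

/-- A node is a leaf if it has no children. -/
def IsLeaf (parent : V → Option V) (v : V) : Prop :=
  ∀ u, parent u ≠ some v

/-- The data `parent`/`root` forms a rooted tree: the root has no parent and
every node reaches the root along its parent chain. -/
structure IsRootedTree (parent : V → Option V) (root : V) : Prop where
  parent_root : parent root = none
  reaches : ∀ v, Anc parent root v

/-- The set of leaf descendants of `v`. -/
def leafDesc (parent : V → Option V) (v : V) : Set V :=
  {l | IsLeaf parent l ∧ Anc parent v l}

/-- The number of leaves of color `i` in the subtree rooted at `v`. -/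
noncomputable def cnt (parent : V → Option V) {C : Type*} (color : V → C) (i : C) (v : V) : ℕ :=
  Set.ncard {l | IsLeaf parent l ∧ Anc parent v l ∧ color l = i}

/-- `w` is the lowest common ancestor of `x` and `y`. -/
def IsLCA (parent : V → Option V) (w x y : V) : Prop :=
  Anc parent w x ∧ Anc parent w y ∧
    ∀ z, Anc parent z x → Anc parent z y → Anc parent z w

section Aux

variable {parent : V → Option V}

/-- Two ancestors of a common node are comparable. -/
lemma anc_total {a b : V}
    (hab : Relation.ReflTransGen (ParentStep parent) a b) :
    ∀ c, Relation.ReflTransGen (ParentStep parent) a c →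
      Relation.ReflTransGen (ParentStep parent) b c ∨
        Relation.ReflTransGen (ParentStep parent) c b := by
  induction hab using Relation.ReflTransGen.head_induction_on with
  | refl => exact fun c h => Or.inl h
  | head h₁ h₂ ih =>
    intro c hac
    rcases hac.cases_head with rfl | ⟨d, hd, hdc⟩
    · exact Or.inr (h₂.head h₁)
    · have hde : d = _ := Option.some_injective _ ((hd : _ = _).symm.trans h₁)
      subst hde
      exact ih c hdc

lemma transGen_head {a b : V} (h : Relation.TransGen (ParentStep parent) a b) :
    ∃ c, ParentStep parent a c ∧ Relation.ReflTransGen (ParentStep parent) c b := by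
  induction h with
  | single h => exact ⟨_, h, Relation.ReflTransGen.refl⟩
  | tail _ h ih =>
    obtain ⟨c, h1, h2⟩ := ih
    exact ⟨c, h1, h2.tail h⟩

lemma cycle_propagate {x y : V}
    (h : Relation.ReflTransGen (ParentStep parent) x y) :
    Relation.TransGen (ParentStep parent) x x →
      Relation.TransGen (ParentStep parent) y y := by
  induction h using Relation.ReflTransGen.head_induction_on with
  | refl => exact id
  | @head a c h₁ h₂ ih =>
    intro ha
    obtain ⟨d, hd, hdx⟩ := transGen_head ha
    have hdc : d = c := Option.some_injective _ ((hd : _ = _).symm.trans h₁)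
    subst hdc
    exact ih (Relation.TransGen.tail' hdx h₁)

lemma no_cycle {root : V} (hT : IsRootedTree parent root) (x : V) :
    ¬ Relation.TransGen (ParentStep parent) x x := by
  intro hx
  have hr : Relation.TransGen (ParentStep parent) root root :=
    cycle_propagate (hT.reaches x) hx
  obtain ⟨c, hc, -⟩ := transGen_head hr
  have hc' : parent root = some c := hc
  rw [hT.parent_root] at hc'
  exact Option.some_ne_none c hc'.symm

lemma anc_antisymm {root : V} (hT : IsRootedTree parent root) {u v : V}
    (h1 : Anc parent u v) (h2 : Anc parent v u) : u = v := by
  by_contra hne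
  rcases (h1 : Relation.ReflTransGen _ v u).cases_head with heq | ⟨c, hc, hcu⟩
  · exact hne heq.symm
  · exact no_cycle hT v (Relation.TransGen.head' hc (hcu.trans h2))

/-- Siblings cannot be comparable. -/
lemma sibling_eq {root : V} (hT : IsRootedTree parent root) {u u' v : V}
    (hu : parent u = some v) (hu' : parent u' = some v)
    (h : Anc parent u u') : u = u' := by
  rcases (h : Relation.ReflTransGen _ u' u).cases_head with heq | ⟨c, hc, hcu⟩
  · exact heq.symm
  · have hcv : c = v := Option.some_injective _ ((hc : _ = _).symm.trans hu')
    have hvu : Relation.ReflTransGen (ParentStep parent) v u := hcv ▸ hcu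
    have huv : u = v := anc_antisymm hT hvu (Relation.ReflTransGen.single hu)
    rw [huv] at hu
    exact absurd (Relation.TransGen.single (show ParentStep parent v v from hu)) (no_cycle hT v)

end Aux

/-- Correctness of the merging step: for an internal node `v`, the maximum of
(a) the mode frequencies of its children and (b) the counts `cnt i v` over colors `i`
for which `v` is the LCA of two distinct leaves colored `i`, equals the mode
frequency of `v`. -/
theorem stmt_11 [Finite V] (parent : V → Option V) (root : V)
    (hT : IsRootedTree parent root) {C : Type*} (color : V → C) (v : V)
    (hint : ∃ u, parent u = some v) :
    sSup ({n | ∃ u, parent u = some v ∧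
            n = sSup {m | ∃ i : C, cnt parent color i u = m}} ∪
          {n | ∃ i : C, (∃ x y : V, x ≠ y ∧ IsLeaf parent x ∧ IsLeaf parent y ∧
              color x = i ∧ color y = i ∧ IsLCA parent v x y) ∧
            n = cnt parent color i v}) =
      sSup {m | ∃ i : C, cnt parent color i v = m} := by
  classical
  obtain ⟨u₀, hu₀⟩ := hint
  set N := Nat.card V with hN
  have hbound : ∀ (i : C) (w : V), cnt parent color i w ≤ N := by
    intro i w
    calc cnt parent color i w ≤ Set.ncard (Set.univ : Set V) :=
          Set.ncard_le_ncard (Set.subset_univ _) Set.finite_univ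
      _ = N := Set.ncard_univ V
  have hbddS : ∀ w : V, BddAbove {m | ∃ i : C, cnt parent color i w = m} := by
    intro w
    exact ⟨N, fun m ⟨i, hi⟩ => hi ▸ hbound i w⟩
  have hsupS_le : ∀ w : V, sSup {m | ∃ i : C, cnt parent color i w = m} ≤ N := by
    intro w
    exact csSup_le' fun m ⟨i, hi⟩ => hi ▸ hbound i w
  have hbddL : BddAbove ({n | ∃ u, parent u = some v ∧
            n = sSup {m | ∃ i : C, cnt parent color i u = m}} ∪
          {n | ∃ i : C, (∃ x y : V, x ≠ y ∧ IsLeaf parent x ∧ IsLeaf parent y ∧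
              color x = i ∧ color y = i ∧ IsLCA parent v x y) ∧
            n = cnt parent color i v}) := by
    refine ⟨N, fun n hn => ?_⟩
    rcases hn with ⟨u, _, rfl⟩ | ⟨i, _, rfl⟩
    · exact hsupS_le u
    · exact hbound i v
  -- basic facts
  have hvnotleaf : ¬ IsLeaf parent v := fun h => h u₀ hu₀
  have cnt_child_le : ∀ (i : C) (u : V), parent u = some v →
      cnt parent color i u ≤ cnt parent color i v := by
    intro i u hu
    refine Set.ncard_le_ncard ?_ (Set.toFinite _)
    rintro l ⟨hl1, hl2, hl3⟩
    exact ⟨hl1, (hl2 : Relation.ReflTransGen _ l u).tail hu, hl3⟩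
  have hchild : ∀ l : V, IsLeaf parent l → Anc parent v l →
      ∃ u, parent u = some v ∧ Anc parent u l := by
    intro l hl hvl
    rcases (hvl : Relation.ReflTransGen _ l v).cases_tail with heq | ⟨c, hlc, hcv⟩
    · exact absurd (heq ▸ hl) hvnotleaf
    · exact ⟨c, hcv, hlc⟩
  apply le_antisymm
  · -- LHS ≤ RHS
    refine csSup_le' fun n hn => ?_
    rcases hn with ⟨u, hu, rfl⟩ | ⟨i, _, rfl⟩
    · refine csSup_le' fun m ⟨i, hi⟩ => ?_
      subst hi
      exact le_trans (cnt_child_le i u hu) (le_csSup (hbddS v) ⟨i, rfl⟩)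
    · exact le_csSup (hbddS v) ⟨i, rfl⟩
  · -- RHS ≤ LHS
    refine csSup_le' fun n hn => ?_
    obtain ⟨i, rfl⟩ := hn
    by_cases hS : {l | IsLeaf parent l ∧ Anc parent v l ∧ color l = i} = ∅
    · simp only [cnt, hS, Set.ncard_empty]
      exact Nat.zero_le _
    · obtain ⟨l, hl⟩ := Set.nonempty_iff_ne_empty.mpr hS
      obtain ⟨u, huv, hul⟩ := hchild l hl.1 hl.2.1
      by_cases hall : ∀ l' ∈ {l | IsLeaf parent l ∧ Anc parent v l ∧ color l = i},
          Anc parent u l'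
      · -- all color-i leaves under one child u
        have hEq : cnt parent color i v = cnt parent color i u := by
          unfold cnt
          congr 1
          ext l'
          constructor
          · rintro ⟨h1, h2, h3⟩
            exact ⟨h1, hall l' ⟨h1, h2, h3⟩, h3⟩
          · rintro ⟨h1, h2, h3⟩
            exact ⟨h1, (h2 : Relation.ReflTransGen _ l' u).tail huv, h3⟩
        rw [hEq]
        refine le_trans (le_csSup (hbddS u) ⟨i, rfl⟩) (le_csSup hbddL ?_)
        exact Or.inl ⟨u, huv, rfl⟩
      · -- leaves under two different children: v is an LCA
        push_neg at hall
        obtain ⟨l', hl', hnot⟩ := hall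
        obtain ⟨u', hu'v, hu'l'⟩ := hchild l' hl'.1 hl'.2.1
        have hll' : l ≠ l' := fun h => hnot (h ▸ hul)
        have huu' : u ≠ u' := fun h => hnot (h ▸ hu'l')
        have hLCA : IsLCA parent v l l' := by
          refine ⟨hl.2.1, hl'.2.1, ?_⟩
          intro z hzl hzl'
          -- z and u are both ancestors of l
          rcases anc_total (a := l) hul z hzl with hzu | huz
          · -- Anc z u : z above u (RTG u z)
            rcases (hzu : Relation.ReflTransGen _ u z).cases_head with heq | ⟨c, hc, hcz⟩
            · exact absurd (heq ▸ hzl') hnot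
            · have hcv : c = v := Option.some_injective _ ((hc : _ = _).symm.trans huv)
              exact hcv ▸ hcz
          · -- u below z; compare u' and z on l' chain
            rcases anc_total (a := l') hu'l' z hzl' with hzu' | hu'z
            · -- z above u' : RTG u' z, and RTG z u, so RTG u' u : Anc u u'
              exact absurd (sibling_eq hT huv hu'v (hzu'.trans huz)) huu'
            · -- u and u' both ancestors of z
              rcases anc_total (a := z) huz u' hu'z with h | h
              · exact absurd (sibling_eq hT hu'v huv h).symm huu'
              · exact absurd (sibling_eq hT huv hu'v h) huu'
        refine le_csSup hbddL (Or.inr ⟨i, ⟨l, l', hll', hl.1, hl'.1, hl.2.2, hl'.2.2, hLCA⟩, rfl⟩)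
end

section
/- Let T be a leaf-colored rooted tree, v a node with parent p, and i a color. Then exactly one of the following holds: (1) count_i(v) = count_i(p), (2) count_i(v) = 0 < count_i(p), or (3) 0 < count_i(v) < count_i(p); and in case (3), p is the LCA of two distinct leaves colored i. -/
variable {V : Type*}

/-- Ancestors of a node are totally ordered along the parent chain. -/
lemma anc_total_s12 (parent : V → Option V) {x a z : V}
    (hz : Anc parent z x) (ha : Anc parent a x) :
    Anc parent z a ∨ Anc parent a z := by
  unfold Anc at *
  induction hz with
  | refl => exact Or.inr ha
  | tail hxb hstep ih =>
    rename_i b c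
    rcases ih with h | h
    · exact Or.inl (h.tail hstep)
    · rcases Relation.ReflTransGen.cases_head h with rfl | ⟨d, hd, hda⟩
      · exact Or.inl (Relation.ReflTransGen.single hstep)
      · have : c = d := by
          have := hstep.symm.trans hd
          exact Option.some.inj this
        subst this
        exact Or.inr hda

lemma anc_trans (parent : V → Option V) {a b c : V}
    (h1 : Anc parent a b) (h2 : Anc parent b c) : Anc parent a c :=
  Relation.ReflTransGen.trans h2 h1

/-- Trichotomy for counts along an edge `(p, v)`: exactly one of
(1) `cnt i v = cnt i p`, (2) `cnt i v = 0 < cnt i p`, (3) `0 < cnt i v < cnt i p`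
holds, and in case (3) the parent `p` is the LCA of two distinct leaves colored `i`. -/
theorem stmt_12 [Finite V] (parent : V → Option V) (root : V)
    (hT : IsRootedTree parent root) {C : Type*} (color : V → C) (i : C)
    (v p : V) (hp : parent v = some p) :
    (cnt parent color i v = cnt parent color i p ∧
      ¬(cnt parent color i v = 0 ∧ 0 < cnt parent color i p) ∧
      ¬(0 < cnt parent color i v ∧ cnt parent color i v < cnt parent color i p)) ∨
    (cnt parent color i v ≠ cnt parent color i p ∧
      (cnt parent color i v = 0 ∧ 0 < cnt parent color i p) ∧
      ¬(0 < cnt parent color i v ∧ cnt parent color i v < cnt parent color i p)) ∨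
    (cnt parent color i v ≠ cnt parent color i p ∧
      ¬(cnt parent color i v = 0 ∧ 0 < cnt parent color i p) ∧
      (0 < cnt parent color i v ∧ cnt parent color i v < cnt parent color i p) ∧
      ∃ x y : V, x ≠ y ∧ IsLeaf parent x ∧ IsLeaf parent y ∧
        color x = i ∧ color y = i ∧ IsLCA parent p x y) := by

  classical
  set Sv := {l | IsLeaf parent l ∧ Anc parent v l ∧ color l = i} with hSv
  set Sp := {l | IsLeaf parent l ∧ Anc parent p l ∧ color l = i} with hSp
  have hcv : cnt parent color i v = Sv.ncard := rfl
  have hcp : cnt parent color i p = Sp.ncard := rfl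
  have hsub : Sv ⊆ Sp := by
    rintro l ⟨hl, hanc, hcol⟩
    exact ⟨hl, hanc.tail hp, hcol⟩
  have hle : Sv.ncard ≤ Sp.ncard := Set.ncard_le_ncard hsub (Set.toFinite _)
  rcases eq_or_lt_of_le hle with heq | hlt
  · left
    rw [hcv, hcp, heq]
    omega
  · rcases Nat.eq_zero_or_pos Sv.ncard with h0 | hpos
    · right; left
      rw [hcv, hcp, h0]
      omega
    · right; right
      refine ⟨by omega, by omega, ⟨by omega, by omega⟩, ?_⟩
      obtain ⟨x, hx⟩ := (Set.ncard_pos (Set.toFinite Sv)).mp hpos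
      have hne : ¬ Sp ⊆ Sv := fun h => absurd (Set.ncard_le_ncard h (Set.toFinite _)) (by omega)
      obtain ⟨y, hyp, hyv⟩ := Set.not_subset.mp hne
      obtain ⟨hxL, hxA, hxC⟩ := hx
      obtain ⟨hyL, hyA, hyC⟩ := hyp
      refine ⟨x, y, ?_, hxL, hyL, hxC, hyC, hxA.tail hp, hyA, ?_⟩
      · rintro rfl; exact hyv ⟨hxL, hxA, hxC⟩
      · intro z hzx hzy
        rcases anc_total_s12 parent hzx (hxA.tail hp : Anc parent p x) with h | h
        · exact h
        · rcases anc_total_s12 parent hzx hxA with h2 | h2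
          · rcases Relation.ReflTransGen.cases_head h2 with heq2 | ⟨d, hd, hda⟩
            · exact absurd ⟨hyL, heq2 ▸ hzy, hyC⟩ hyv
            · have : p = d := Option.some.inj ((hp ▸ rfl : parent v = some p).symm.trans hd)
              exact this ▸ hda
          · exact absurd ⟨hyL, anc_trans parent h2 hzy, hyC⟩ hyv
end
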